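/- Let (α, 𝒜, m) be a measure space and 1 ≤ p ≤ 2. Let D be a linear subspace of the space of bounded measurable functions α → ℝ such that every f ∈ D satisfies ∫ |f|^p dm < ∞. Let Γ : D × D → (measurable functions α → ℝ) be symmetric and ℝ-bilinear, with Γ(f, f) ≥ 0 m-a.e. and ∫ Γ(f, f) dm < ∞ for every f ∈ D. Assume the chain rule: for all φ, ψ : ℝ → ℝ that are smooth and bounded with all derivatives bounded and φ(0) = ψ(0) = 0, and for all f, g ∈ D, one has φ∘f ∈ D, ψ∘g ∈ D, and Γ(φ∘f, ψ∘g) = (φ′∘f)·(ψ′∘g)·Γ(f, g) m-a.e. Assume L²-closability: for every sequence (g_n) in D with ∫ Γ(g_n − g_m, g_n − g_m) dm → 0 as n, m → ∞ and ∫ |g_n|² dm → 0, one has ∫ Γ(g_n, g_n) dm → 0. Then closability also holds in L^p: for every sequence (f_n) in D with ∫ Γ(f_n − f_m, f_n − f_m) dm → 0 as n, m → ∞ and ∫ |f_n|^p dm → 0, one has ∫ Γ(f_n, f_n) dm → 0. -/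

import Mathlib

open MeasureTheory Filter Topology
open scoped ENNReal NNReal

section AuxLemmas

lemma aux_nonneg_of_rat (F : ℝ → ℝ) (hF : Continuous F) (h : ∀ q : ℚ, 0 ≤ F q) (u : ℝ) :
    0 ≤ F u := by
  have hclosed : IsClosed {u : ℝ | 0 ≤ F u} := isClosed_le continuous_const hF
  have hsub : Set.range ((↑) : ℚ → ℝ) ⊆ {u : ℝ | 0 ≤ F u} := by
    rintro _ ⟨q, rfl⟩; exact h q
  exact hclosed.closure_subset_iff.mpr hsub (Rat.denseRange_cast u)

lemma aux_quad_key (a b c s t : ℝ)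
    (hQ : ∀ u v : ℝ, 0 ≤ u ^ 2 * a + 2 * (u * v) * b + v ^ 2 * c)
    (hs : s ^ 2 ≤ 1) (ht : t ^ 2 ≤ 1) :
    s ^ 2 * a - 2 * (s * t) * b + t ^ 2 * c
      ≤ 6 * (a - 2 * b + c) + 4 * (s - t) ^ 2 * c := by
  have hA : 0 ≤ a - 2 * b + c := by have := hQ 1 (-1); nlinarith
  have hC : 0 ≤ c := by have := hQ 0 1; nlinarith
  have hP : a + 2 * b + c ≤ 2 * (a - 2 * b + c) + 8 * c := by
    have := hQ 1 (-3); nlinarith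
  have hQts := hQ t (-s)
  have e1 : s ^ 2 * a - 2 * (s * t) * b + t ^ 2 * c
      = (s + t) ^ 2 / 2 * (a - 2 * b + c) / 2 * 2 + (s - t) ^ 2 / 2 * (a + 2 * b + c) / 2 * 2
        - (t ^ 2 * a + 2 * (t * -s) * b + s ^ 2 * c) := by ring
  have h1 : (0:ℝ) ≤ 4 - (s + t) ^ 2 := by nlinarith
  have h2 : (0:ℝ) ≤ 4 - (s - t) ^ 2 := by nlinarith
  nlinarith [mul_nonneg h1 hA, mul_nonneg h2 hA,
    mul_nonneg (sq_nonneg (s - t))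
      (by linarith : (0:ℝ) ≤ 2 * (a - 2 * b + c) + 8 * c - (a + 2 * b + c))]

lemma aux_rpow_sub (p : ℝ) (hp : 0 ≤ p) (a b : ℝ) :
    |a - b| ^ p ≤ 2 ^ p * (|a| ^ p + |b| ^ p) := by
  have h1 : |a - b| ≤ 2 * max |a| |b| := by
    calc |a - b| ≤ |a| + |b| := abs_sub a b
      _ ≤ 2 * max |a| |b| := by
          rcases le_total |a| |b| with h | h
          · rw [max_eq_right h]; linarith
          · rw [max_eq_left h]; linarith
  calc |a - b| ^ p ≤ (2 * max |a| |b|) ^ p :=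
        Real.rpow_le_rpow (abs_nonneg _) h1 hp
    _ = 2 ^ p * (max |a| |b|) ^ p := by
        rw [Real.mul_rpow (by norm_num) (le_max_iff.mpr (Or.inl (abs_nonneg a)))]
    _ ≤ 2 ^ p * (|a| ^ p + |b| ^ p) := by
        gcongr
        rcases le_total |a| |b| with h | h
        · rw [max_eq_right h]
          nlinarith [Real.rpow_nonneg (abs_nonneg a) p]
        · rw [max_eq_left h]
          nlinarith [Real.rpow_nonneg (abs_nonneg b) p]

lemma aux_sq_le (p : ℝ) (hp1 : 1 ≤ p) (hp2 : p ≤ 2) (y u : ℝ)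
    (h2 : |u| ≤ 2) (hy : |u| ≤ |y|) : u ^ 2 ≤ 2 ^ (2 - p) * |y| ^ p := by
  have h0 : (0:ℝ) ≤ 2 ^ (2 - p) * |y| ^ p :=
    mul_nonneg (Real.rpow_nonneg (by norm_num) _) (Real.rpow_nonneg (abs_nonneg _) _)
  rcases eq_or_lt_of_le (abs_nonneg u) with h | h
  · have : u = 0 := abs_eq_zero.mp h.symm
    simpa [this] using h0
  · have e1 : u ^ 2 = |u| ^ ((2 - p) + p) := by
      rw [show (2 - p) + p = ((2:ℕ):ℝ) by push_cast; ring, Real.rpow_natCast |u| 2, sq_abs u]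
    rw [e1, Real.rpow_add h]
    exact mul_le_mul (Real.rpow_le_rpow (abs_nonneg _) h2 (by linarith))
      (Real.rpow_le_rpow (abs_nonneg _) hy (by linarith))
      (Real.rpow_nonneg (abs_nonneg _) _) (Real.rpow_nonneg (by norm_num) _)

def auxBump : ContDiffBump (0 : ℝ) := ⟨1, 2, one_pos, one_lt_two⟩

lemma aux_exists_trunc : ∃ φ : ℝ → ℝ, ContDiff ℝ (⊤ : ℕ∞) φ ∧
    (∀ n : ℕ, ∃ C : ℝ, ∀ t, |iteratedDeriv n φ t| ≤ C) ∧ φ 0 = 0 ∧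
    (∀ t, |φ t| ≤ 2) ∧ (∀ t, |φ t| ≤ |t|) ∧ (∀ t, |deriv φ t| ≤ 1) ∧
    (∀ t, |t| ≤ 1 → deriv φ t = 1) ∧
    ∃ L : ℝ, 0 ≤ L ∧ ∀ s t, |deriv φ s - deriv φ t| ≤ L * |s - t| := by
  have hrIn : auxBump.rIn = 1 := rfl
  have hrOut : auxBump.rOut = 2 := rfl
  set χ : ℝ → ℝ := fun x => auxBump x with hχ
  have hχsm : ContDiff ℝ (⊤ : ℕ∞) χ := auxBump.contDiff
  have hχc : Continuous χ := hχsm.continuous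
  have hχ01 : ∀ x, |χ x| ≤ 1 := fun x => by
    rw [abs_le]; exact ⟨by linarith [auxBump.nonneg' x], auxBump.le_one⟩
  have hχzero : ∀ x : ℝ, 2 ≤ |x| → χ x = 0 := by
    intro x hx
    have : x ∉ Function.support χ := by
      rw [show Function.support χ = Metric.ball (0:ℝ) auxBump.rOut from auxBump.support_eq]
      rw [hrOut]
      simp only [Metric.mem_ball, Real.dist_eq, sub_zero]
      push_neg
      exact hx
    simpa [Function.mem_support, not_not] using this
  set φ : ℝ → ℝ := fun t => ∫ x in (0:ℝ)..t, χ x with hφ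
  have hderiv : deriv φ = χ := funext fun t => Continuous.deriv_integral χ hχc 0 t
  have hdiff : Differentiable ℝ φ := fun t =>
    ((hχc.integral_hasStrictDerivAt 0 t).hasDerivAt).differentiableAt
  have hcd : ContDiff ℝ (⊤ : ℕ∞) φ := by
    rw [show ((⊤ : ℕ∞) : WithTop ℕ∞) = (⊤ : ℕ∞) from rfl]
    exact contDiff_infty_iff_deriv.mpr ⟨hdiff, by rw [hderiv]; exact hχsm⟩
  have hle : ∀ t, |φ t| ≤ |t| := by
    intro t
    have := intervalIntegral.norm_integral_le_of_norm_le_const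
      (f := χ) (a := 0) (b := t) (C := 1) (fun x _ => by simpa using hχ01 x)
    simpa using this
  have hphi2 : ∀ t, |φ t| ≤ 2 := by
    have hstop : ∀ a t : ℝ, 2 ≤ |a| → (∀ x ∈ Set.uIcc a t, 2 ≤ |x|) → φ t = φ a := by
      intro a t _ hall
      have hz : ∫ x in a..t, χ x = 0 := by
        have : Set.EqOn χ 0 (Set.uIcc a t) := fun x hx => hχzero x (hall x hx)
        rw [intervalIntegral.integral_congr this]
        simp
      have hadd : (∫ x in (0:ℝ)..a, χ x) + ∫ x in a..t, χ x = ∫ x in (0:ℝ)..t, χ x :=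
        intervalIntegral.integral_add_adjacent_intervals
          (hχc.intervalIntegrable _ _) (hχc.intervalIntegrable _ _)
      simp only [hφ]
      rw [← hadd, hz, add_zero]
    intro t
    rcases le_or_gt (|t|) 2 with h | h
    · exact (hle t).trans h
    · rcases le_or_gt 0 t with hp | hn
      · have h2t : (2:ℝ) ≤ t := by
          rw [abs_of_nonneg hp] at h; linarith
        have := hstop 2 t (by norm_num) (fun x hx => by
          rw [Set.uIcc_of_le h2t] at hx
          rw [abs_of_nonneg (by linarith [hx.1] : (0:ℝ) ≤ x)]
          exact hx.1)
        rw [this]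
        exact (hle 2).trans_eq (by norm_num)
      · have h2t : t ≤ -2 := by
          rw [abs_of_neg hn] at h; linarith
        have := hstop (-2) t (by norm_num) (fun x hx => by
          rw [Set.uIcc_of_ge h2t] at hx
          rw [abs_of_nonpos (by linarith [hx.2] : x ≤ (0:ℝ))]
          linarith [hx.2])
        rw [this]
        calc |φ (-2)| ≤ |(-2 : ℝ)| := hle (-2)
          _ = 2 := by norm_num
  refine ⟨φ, hcd, ?_, by simp only [hφ]; exact intervalIntegral.integral_same, ?_, hle, ?_, ?_, ?_⟩
  · intro n
    cases n with
    | zero =>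
      exact ⟨2, fun t => by rw [iteratedDeriv_zero]; exact hphi2 t⟩
    | succ k =>
      have hrw : iteratedDeriv (k+1) φ = iteratedDeriv k χ := by
        rw [iteratedDeriv_succ', hderiv]
      have hcs : HasCompactSupport χ := auxBump.hasCompactSupport
      have hcsk : ∀ j : ℕ, HasCompactSupport (iteratedDeriv j χ) := by
        intro j; induction j with
        | zero => rw [iteratedDeriv_zero]; exact hcs
        | succ i ih => rw [iteratedDeriv_succ]; exact ih.deriv
      have hcont : Continuous (iteratedDeriv k χ) :=
        hχsm.continuous_iteratedDeriv k (by exact_mod_cast le_top)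
      obtain ⟨C, hC⟩ := (hcsk k).exists_bound_of_continuous hcont
      exact ⟨C, fun t => by rw [hrw]; simpa using hC t⟩
  · exact hphi2
  · intro t; rw [hderiv]; exact hχ01 t
  · intro t ht
    rw [hderiv]
    exact auxBump.one_of_mem_closedBall
      (by simp only [Metric.mem_closedBall, Real.dist_eq, sub_zero, hrIn]; exact ht)
  · have hcont : Continuous (deriv χ) := hχsm.continuous_deriv (by exact_mod_cast le_top)
    obtain ⟨C, hC⟩ := (auxBump.hasCompactSupport.deriv).exists_bound_of_continuous hcont
    have hC0 : 0 ≤ C := le_trans (norm_nonneg _) (hC 0)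
    refine ⟨C, hC0, fun s t => ?_⟩
    rw [hderiv]
    have := Convex.norm_image_sub_le_of_norm_deriv_le
      (f := χ) (s := Set.univ)
      (fun x _ => (hχsm.differentiable (by simp)).differentiableAt)
      (fun x _ => hC x) convex_univ (Set.mem_univ t) (Set.mem_univ s)
    simpa [Real.norm_eq_abs] using this

lemma aux_two_mul_le {x ε : ℝ≥0∞} (h : x ≤ ε / 2) : 2 * x ≤ ε := by
  calc 2 * x = x + x := two_mul x
    _ ≤ ε / 2 + ε / 2 := add_le_add h h
    _ = ε := ENNReal.add_halves ε

lemma aux_eight_mul_le {x ε : ℝ≥0∞} (h : x ≤ ε / 2 / 2 / 2) : 8 * x ≤ ε := by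
  have h8 : (8:ℝ≥0∞) * x = 2 * (2 * (2 * x)) := by ring
  rw [h8]
  exact aux_two_mul_le (aux_two_mul_le (aux_two_mul_le h))

lemma aux_sixteen_mul_le {x ε : ℝ≥0∞} (h : x ≤ ε / 2 / 2 / 2 / 2) : 16 * x ≤ ε := by
  have h16 : (16:ℝ≥0∞) * x = 2 * (2 * (2 * (2 * x))) := by ring
  rw [h16]
  exact aux_two_mul_le (aux_two_mul_le (aux_two_mul_le (aux_two_mul_le h)))

lemma aux_half_pos {ε : ℝ≥0∞} (h : 0 < ε) : 0 < ε / 2 :=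
  ENNReal.div_pos h.ne' (by norm_num)

lemma aux_UI {α : Type*} [MeasurableSpace α] (m : Measure α) (G : ℕ → α → ℝ≥0∞)
    (hGfin : ∀ n, ∫⁻ x, G n x ∂m ≠ ⊤)
    (key : ∀ ε : ℝ≥0∞, 0 < ε → ∃ K : ℕ, ∀ n, K ≤ n → ∀ s : Set α, MeasurableSet s →
      ∫⁻ x in s, G n x ∂m ≤ ε + 2 * ∫⁻ x in s, G K x ∂m)
    {ι : Type*} [SemilatticeSup ι] [Nonempty ι] (A : ι → Set α)
    (hA : ∀ i, MeasurableSet (A i))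
    (hAm : Tendsto (fun i => m (A i)) atTop (𝓝 0)) (σ : ι → ℕ)
    (hσ : Tendsto σ atTop atTop) :
    Tendsto (fun i => ∫⁻ x in A i, G (σ i) x ∂m) atTop (𝓝 0) := by
  rw [ENNReal.tendsto_nhds_zero]
  intro ε hε
  obtain ⟨K, hK⟩ := key (ε / 2) (aux_half_pos hε)
  have h2 : Tendsto (fun i => ∫⁻ x in A i, G K x ∂m) atTop (𝓝 0) :=
    tendsto_setLIntegral_zero (hGfin K) hAm
  have h3 := (ENNReal.tendsto_nhds_zero.mp h2) (ε / 2 / 2) (aux_half_pos (aux_half_pos hε))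
  filter_upwards [h3, hσ.eventually_ge_atTop K] with i h3i hσi
  calc ∫⁻ x in A i, G (σ i) x ∂m ≤ ε / 2 + 2 * ∫⁻ x in A i, G K x ∂m :=
        hK (σ i) hσi (A i) (hA i)
    _ ≤ ε / 2 + ε / 2 := add_le_add le_rfl (aux_two_mul_le h3i)
    _ = ε := ENNReal.add_halves ε

lemma aux_squeeze_zero {ι : Type*} {l : Filter ι} {u v : ι → ℝ≥0∞} {c : ℝ≥0∞}
    (hc : c ≠ ⊤) (hle : ∀ i, u i ≤ c * v i) (hv : Tendsto v l (𝓝 0)) :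
    Tendsto u l (𝓝 0) := by
  have h1 : Tendsto (fun i => c * v i) l (𝓝 0) := by
    have := ENNReal.Tendsto.const_mul (a := c) hv (Or.inr hc)
    simpa using this
  exact tendsto_of_tendsto_of_tendsto_of_le_of_le tendsto_const_nhds h1
    (fun i => zero_le) hle

end AuxLemmas

set_option maxHeartbeats 1000000 in
/-- **From `L²`-closability to `L^p`-closability, `1 ≤ p ≤ 2`.**
Let `D` be a linear space of bounded measurable functions with finite `p`-th moments and
`Γ` a symmetric bilinear nonnegative square-field operator on `D` with finite energies,
satisfying the chain rule along smooth bounded functions (with bounded derivatives of all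
orders) vanishing at `0`.  If the associated pre-form is closable in `L²(m)`, then it is
closable in `L^p(m)`. -/
theorem closability_L2_to_Lp
    {α : Type*} [MeasurableSpace α] (m : Measure α) (p : ℝ)
    (hp1 : 1 ≤ p) (hp2 : p ≤ 2)
    (D : Set (α → ℝ))
    (hD_add : ∀ f ∈ D, ∀ g ∈ D, f + g ∈ D)
    (hD_smul : ∀ (c : ℝ), ∀ f ∈ D, c • f ∈ D)
    (hD_meas : ∀ f ∈ D, Measurable f)
    (hD_bdd : ∀ f ∈ D, ∃ C : ℝ, ∀ x, |f x| ≤ C)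
    (hD_lp : ∀ f ∈ D, ∫⁻ x, ENNReal.ofReal (|f x| ^ p) ∂m < ⊤)
    (Γ : (α → ℝ) → (α → ℝ) → α → ℝ)
    (hΓ_meas : ∀ f ∈ D, ∀ g ∈ D, Measurable (Γ f g))
    (hΓ_symm : ∀ f ∈ D, ∀ g ∈ D, Γ f g = Γ g f)
    (hΓ_add : ∀ f ∈ D, ∀ g ∈ D, ∀ h ∈ D, Γ (f + g) h = Γ f h + Γ g h)
    (hΓ_smul : ∀ (c : ℝ), ∀ f ∈ D, ∀ g ∈ D, Γ (c • f) g = c • Γ f g)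
    (hΓ_pos : ∀ f ∈ D, ∀ᵐ x ∂m, 0 ≤ Γ f f x)
    (hΓ_int : ∀ f ∈ D, ∫⁻ x, ENNReal.ofReal (Γ f f x) ∂m < ⊤)
    (hchain : ∀ φ ψ : ℝ → ℝ, ContDiff ℝ (⊤ : ℕ∞) φ → ContDiff ℝ (⊤ : ℕ∞) ψ →
      (∀ n : ℕ, ∃ C : ℝ, ∀ t, |iteratedDeriv n φ t| ≤ C) →
      (∀ n : ℕ, ∃ C : ℝ, ∀ t, |iteratedDeriv n ψ t| ≤ C) →
      φ 0 = 0 → ψ 0 = 0 →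
      ∀ f ∈ D, ∀ g ∈ D, (φ ∘ f) ∈ D ∧ (ψ ∘ g) ∈ D ∧
        (∀ᵐ x ∂m, Γ (φ ∘ f) (ψ ∘ g) x = deriv φ (f x) * deriv ψ (g x) * Γ f g x))
    (hL2 : ∀ g : ℕ → α → ℝ, (∀ n, g n ∈ D) →
      Tendsto (fun nm : ℕ × ℕ =>
          ∫⁻ x, ENNReal.ofReal (Γ (g nm.1 - g nm.2) (g nm.1 - g nm.2) x) ∂m)
        atTop (𝓝 0) →
      Tendsto (fun n => ∫⁻ x, ENNReal.ofReal ((g n x) ^ 2) ∂m) atTop (𝓝 0) →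
      Tendsto (fun n => ∫⁻ x, ENNReal.ofReal (Γ (g n) (g n) x) ∂m) atTop (𝓝 0)) :
    ∀ f : ℕ → α → ℝ, (∀ n, f n ∈ D) →
      Tendsto (fun nm : ℕ × ℕ =>
          ∫⁻ x, ENNReal.ofReal (Γ (f nm.1 - f nm.2) (f nm.1 - f nm.2) x) ∂m)
        atTop (𝓝 0) →
      Tendsto (fun n => ∫⁻ x, ENNReal.ofReal (|f n x| ^ p) ∂m) atTop (𝓝 0) →
      Tendsto (fun n => ∫⁻ x, ENNReal.ofReal (Γ (f n) (f n) x) ∂m) atTop (𝓝 0) := by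
  intro f hf hC hLp
  have hp0 : 0 ≤ p := le_trans zero_le_one hp1
  -- D is closed under subtraction
  have hD_sub : ∀ u ∈ D, ∀ v ∈ D, u - v ∈ D := by
    intro u hu v hv
    have : u - v = u + (-1 : ℝ) • v := by funext x; simp [sub_eq_add_neg]
    rw [this]
    exact hD_add u hu _ (hD_smul (-1) v hv)
  -- pointwise bilinear expansion
  have hexp : ∀ u ∈ D, ∀ v ∈ D, ∀ c d : ℝ, ∀ x,
      Γ (c • u + d • v) (c • u + d • v) x
        = c ^ 2 * Γ u u x + 2 * (c * d) * Γ u v x + d ^ 2 * Γ v v x := by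
    intro u hu v hv c d x
    have hcu := hD_smul c u hu
    have hdv := hD_smul d v hv
    have hw := hD_add _ hcu _ hdv
    have e1 := hΓ_add _ hcu _ hdv _ hw
    have e2 := hΓ_smul c u hu _ hw
    have e3 := hΓ_smul d v hv _ hw
    have e4 := hΓ_symm u hu _ hw
    have e5 := hΓ_add _ hcu _ hdv u hu
    have e6 := hΓ_smul c u hu u hu
    have e7 := hΓ_smul d v hv u hu
    have e8 := hΓ_symm v hv u hu
    have e9 := hΓ_symm v hv _ hw
    have e10 := hΓ_add _ hcu _ hdv v hv
    have e11 := hΓ_smul c u hu v hv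
    have e12 := hΓ_smul d v hv v hv
    calc Γ (c • u + d • v) (c • u + d • v) x
        = c * Γ u (c • u + d • v) x + d * Γ v (c • u + d • v) x := by
          rw [e1]; simp only [Pi.add_apply, e2, e3, Pi.smul_apply, smul_eq_mul]
      _ = c * (c * Γ u u x + d * Γ v u x) + d * (c * Γ u v x + d * Γ v v x) := by
          rw [e4, e9, e5, e10]
          simp only [Pi.add_apply, e6, e7, e11, e12, Pi.smul_apply, smul_eq_mul]
      _ = c ^ 2 * Γ u u x + 2 * (c * d) * Γ u v x + d ^ 2 * Γ v v x := by
          rw [e8]; ring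
  -- a.e. positive semidefiniteness of the 2×2 matrix
  have hpsd : ∀ u ∈ D, ∀ v ∈ D, ∀ᵐ x ∂m, ∀ s t : ℝ,
      0 ≤ s ^ 2 * Γ u u x + 2 * (s * t) * Γ u v x + t ^ 2 * Γ v v x := by
    intro u hu v hv
    have hq : ∀ᵐ x ∂m, ∀ q r : ℚ,
        0 ≤ (q:ℝ) ^ 2 * Γ u u x + 2 * ((q:ℝ) * (r:ℝ)) * Γ u v x + (r:ℝ) ^ 2 * Γ v v x := by
      rw [ae_all_iff]
      intro q
      rw [ae_all_iff]
      intro r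
      have hmem := hD_add _ (hD_smul (q:ℝ) u hu) _ (hD_smul (r:ℝ) v hv)
      filter_upwards [hΓ_pos _ hmem] with x hx
      rw [← hexp u hu v hv (q:ℝ) (r:ℝ) x]
      exact hx
    filter_upwards [hq] with x hx
    have step1 : ∀ q : ℚ, ∀ t : ℝ,
        0 ≤ (q:ℝ) ^ 2 * Γ u u x + 2 * ((q:ℝ) * t) * Γ u v x + t ^ 2 * Γ v v x := by
      intro q
      exact aux_nonneg_of_rat _ (by fun_prop) (fun r => hx q r)
    intro s t
    exact aux_nonneg_of_rat
      (fun s => s ^ 2 * Γ u u x + 2 * (s * t) * Γ u v x + t ^ 2 * Γ v v x)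
      (by fun_prop) (fun q => step1 q t) s
  -- a.e. sum bound
  have hsumAE : ∀ u ∈ D, ∀ v ∈ D, ∀ᵐ x ∂m,
      ENNReal.ofReal (Γ (u + v) (u + v) x)
        ≤ 2 * ENNReal.ofReal (Γ u u x) + 2 * ENNReal.ofReal (Γ v v x) := by
    intro u hu v hv
    filter_upwards [hpsd u hu v hv] with x hx
    have huv : (1:ℝ) • u + (1:ℝ) • v = u + v := by rw [one_smul, one_smul]
    have e : Γ (u + v) (u + v) x
        = 1 ^ 2 * Γ u u x + 2 * (1 * 1) * Γ u v x + 1 ^ 2 * Γ v v x := by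
      rw [← huv]; exact hexp u hu v hv 1 1 x
    have h1 : Γ (u + v) (u + v) x ≤ 2 * Γ u u x + 2 * Γ v v x := by
      have h2 := hx 1 (-1)
      rw [e]; nlinarith
    calc ENNReal.ofReal (Γ (u + v) (u + v) x)
        ≤ ENNReal.ofReal (2 * Γ u u x + 2 * Γ v v x) := ENNReal.ofReal_le_ofReal h1
      _ ≤ ENNReal.ofReal (2 * Γ u u x) + ENNReal.ofReal (2 * Γ v v x) :=
          ENNReal.ofReal_add_le
      _ = 2 * ENNReal.ofReal (Γ u u x) + 2 * ENNReal.ofReal (Γ v v x) := by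
          rw [ENNReal.ofReal_mul (by norm_num), ENNReal.ofReal_mul (by norm_num)]
          norm_num
  -- integrated sum bound on arbitrary sets
  have hEsum : ∀ u ∈ D, ∀ v ∈ D, ∀ s : Set α, MeasurableSet s →
      ∫⁻ x in s, ENNReal.ofReal (Γ (u + v) (u + v) x) ∂m
        ≤ 2 * ∫⁻ x in s, ENNReal.ofReal (Γ u u x) ∂m
          + 2 * ∫⁻ x in s, ENNReal.ofReal (Γ v v x) ∂m := by
    intro u hu v hv s hs
    calc ∫⁻ x in s, ENNReal.ofReal (Γ (u + v) (u + v) x) ∂m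
        ≤ ∫⁻ x in s,
            (2 * ENNReal.ofReal (Γ u u x) + 2 * ENNReal.ofReal (Γ v v x)) ∂m :=
          lintegral_mono_ae (ae_restrict_of_ae (hsumAE u hu v hv))
      _ = 2 * ∫⁻ x in s, ENNReal.ofReal (Γ u u x) ∂m
          + 2 * ∫⁻ x in s, ENNReal.ofReal (Γ v v x) ∂m := by
          rw [lintegral_add_left (((hΓ_meas u hu u hu).ennreal_ofReal).const_mul 2),
            lintegral_const_mul' _ _ (by norm_num), lintegral_const_mul' _ _ (by norm_num)]
  -- uniform-integrability key estimate
  have hkey : ∀ ε : ℝ≥0∞, 0 < ε → ∃ K : ℕ, ∀ n, K ≤ n → ∀ s : Set α, MeasurableSet s →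
      ∫⁻ x in s, ENNReal.ofReal (Γ (f n) (f n) x) ∂m
        ≤ ε + 2 * ∫⁻ x in s, ENNReal.ofReal (Γ (f K) (f K) x) ∂m := by
    intro ε hε
    have h := (ENNReal.tendsto_nhds_zero.mp hC) (ε / 2) (aux_half_pos hε)
    rw [eventually_atTop] at h
    obtain ⟨⟨N1, N2⟩, hN⟩ := h
    set K := max N1 N2 with hK
    refine ⟨K, fun n hn s hs => ?_⟩
    have hdiffD := hD_sub (f n) (hf n) (f K) (hf K)
    have hae := hsumAE _ hdiffD _ (hf K)
    have hplus : f n - f K + f K = f n := sub_add_cancel _ _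
    have hEs := hEsum _ hdiffD _ (hf K) s hs
    rw [hplus] at hEs
    have hsmall : ∫⁻ x, ENNReal.ofReal
        (Γ (f n - f K) (f n - f K) x) ∂m ≤ ε / 2 := by
      have := hN (n, K) (Prod.mk_le_mk.mpr
        ⟨le_trans (le_max_left _ _) hn, le_max_right _ _⟩)
      exact this
    calc ∫⁻ x in s, ENNReal.ofReal (Γ (f n) (f n) x) ∂m
        ≤ 2 * ∫⁻ x in s, ENNReal.ofReal (Γ (f n - f K) (f n - f K) x) ∂m
          + 2 * ∫⁻ x in s, ENNReal.ofReal (Γ (f K) (f K) x) ∂m := hEs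
      _ ≤ ε + 2 * ∫⁻ x in s, ENNReal.ofReal (Γ (f K) (f K) x) ∂m := by
          refine add_le_add ?_ le_rfl
          exact aux_two_mul_le (le_trans (setLIntegral_le_lintegral _ _) hsmall)
  -- uniform boundedness of energies
  have hB : ∃ B : ℝ≥0∞, B ≠ ⊤ ∧ ∀ n, ∫⁻ x, ENNReal.ofReal (Γ (f n) (f n) x) ∂m ≤ B := by
    have h := (ENNReal.tendsto_nhds_zero.mp hC) 1 zero_lt_one
    rw [eventually_atTop] at h
    obtain ⟨⟨N1, N2⟩, hN⟩ := h
    set K := max N1 N2 with hKdef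
    refine ⟨2 * 1 + 2 * (∫⁻ x, ENNReal.ofReal (Γ (f K) (f K) x) ∂m)
      + ∑ k ∈ Finset.range K, ∫⁻ x, ENNReal.ofReal (Γ (f k) (f k) x) ∂m, ?_, ?_⟩
    · refine ENNReal.add_ne_top.mpr ⟨ENNReal.add_ne_top.mpr ⟨by norm_num, ?_⟩, ?_⟩
      · exact ENNReal.mul_ne_top (by norm_num) (hΓ_int _ (hf K)).ne
      · exact (ENNReal.sum_lt_top.mpr fun i _ => hΓ_int _ (hf i)).ne
    · intro n
      rcases le_or_gt K n with hn | hn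
      · have hdiffD := hD_sub (f n) (hf n) (f K) (hf K)
        have hEs := hEsum _ hdiffD _ (hf K) Set.univ MeasurableSet.univ
        have hplus : f n - f K + f K = f n := sub_add_cancel _ _
        rw [hplus] at hEs
        simp only [Measure.restrict_univ] at hEs
        have hsmall : ∫⁻ x, ENNReal.ofReal
            (Γ (f n - f K) (f n - f K) x) ∂m ≤ 1 :=
          hN (n, K) (Prod.mk_le_mk.mpr
            ⟨le_trans (le_max_left _ _) hn, le_max_right _ _⟩)
        refine le_trans hEs (le_trans (add_le_add (mul_le_mul_right hsmall 2) le_rfl) ?_)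
        exact le_self_add
      · refine le_trans ?_ le_add_self
        exact Finset.single_le_sum
          (f := fun k => ∫⁻ x, ENNReal.ofReal (Γ (f k) (f k) x) ∂m)
          (fun i _ => zero_le) (Finset.mem_range.mpr hn)
  -- Chebyshev
  have hcheb : ∀ (h : α → ℝ), Measurable h → ∀ δ : ℝ, 0 < δ →
      m {x | δ < |h x|} ≤ (∫⁻ x, ENNReal.ofReal (|h x| ^ p) ∂m) / ENNReal.ofReal (δ ^ p) := by
    intro h hm δ hδ
    have hmeas : Measurable fun x => ENNReal.ofReal (|h x| ^ p) :=
      ((Real.continuous_rpow_const hp0).measurable.comp hm.abs).ennreal_ofReal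
    have hsub : {x | δ < |h x|}
        ⊆ {x | ENNReal.ofReal (δ ^ p) ≤ ENNReal.ofReal (|h x| ^ p)} := fun x hx =>
      ENNReal.ofReal_le_ofReal (Real.rpow_le_rpow hδ.le (le_of_lt hx) hp0)
    calc m {x | δ < |h x|} ≤ m {x | ENNReal.ofReal (δ ^ p) ≤ ENNReal.ofReal (|h x| ^ p)} :=
          measure_mono hsub
      _ ≤ (∫⁻ x, ENNReal.ofReal (|h x| ^ p) ∂m) / ENNReal.ofReal (δ ^ p) :=
          meas_ge_le_lintegral_div hmeas.aemeasurable
            (ENNReal.ofReal_pos.mpr (Real.rpow_pos_of_pos hδ p)).ne' ENNReal.ofReal_ne_top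
  -- L^p smallness of differences, jointly in (n,m)
  have hLpdiff : Tendsto (fun nm : ℕ × ℕ =>
      ∫⁻ x, ENNReal.ofReal (|f nm.1 x - f nm.2 x| ^ p) ∂m) atTop (𝓝 0) := by
    have hb : ∀ nm : ℕ × ℕ, ∫⁻ x, ENNReal.ofReal (|f nm.1 x - f nm.2 x| ^ p) ∂m
        ≤ ENNReal.ofReal (2 ^ p) * ((∫⁻ x, ENNReal.ofReal (|f nm.1 x| ^ p) ∂m)
          + ∫⁻ x, ENNReal.ofReal (|f nm.2 x| ^ p) ∂m) := by
      intro nm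
      have hmeas : ∀ n : ℕ, Measurable fun x => ENNReal.ofReal (|f n x| ^ p) := fun n =>
        ((Real.continuous_rpow_const hp0).measurable.comp
          (hD_meas _ (hf n)).abs).ennreal_ofReal
      calc ∫⁻ x, ENNReal.ofReal (|f nm.1 x - f nm.2 x| ^ p) ∂m
          ≤ ∫⁻ x, ENNReal.ofReal (2 ^ p)
              * (ENNReal.ofReal (|f nm.1 x| ^ p) + ENNReal.ofReal (|f nm.2 x| ^ p)) ∂m := by
            refine lintegral_mono fun x => ?_
            rw [← ENNReal.ofReal_add (Real.rpow_nonneg (abs_nonneg _) _)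
              (Real.rpow_nonneg (abs_nonneg _) _),
              ← ENNReal.ofReal_mul (Real.rpow_nonneg (by norm_num) _)]
            exact ENNReal.ofReal_le_ofReal (aux_rpow_sub p hp0 _ _)
        _ = ENNReal.ofReal (2 ^ p) * ((∫⁻ x, ENNReal.ofReal (|f nm.1 x| ^ p) ∂m)
              + ∫⁻ x, ENNReal.ofReal (|f nm.2 x| ^ p) ∂m) := by
            rw [lintegral_const_mul' _ _ ENNReal.ofReal_ne_top,
              lintegral_add_left (hmeas nm.1)]
    have hfst : Tendsto (Prod.fst : ℕ × ℕ → ℕ) atTop atTop := by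
      rw [← prod_atTop_atTop_eq]; exact tendsto_fst
    have hsnd : Tendsto (Prod.snd : ℕ × ℕ → ℕ) atTop atTop := by
      rw [← prod_atTop_atTop_eq]; exact tendsto_snd
    have htend : Tendsto (fun nm : ℕ × ℕ => (∫⁻ x, ENNReal.ofReal (|f nm.1 x| ^ p) ∂m)
        + ∫⁻ x, ENNReal.ofReal (|f nm.2 x| ^ p) ∂m) atTop (𝓝 0) := by
      have := Tendsto.add (hLp.comp hfst) (hLp.comp hsnd)
      simpa using this
    exact aux_squeeze_zero ENNReal.ofReal_ne_top hb htend
  -- the truncation function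
  obtain ⟨φ, hφcd, hφbd, hφ0, hφ2, hφle, hφ'le, hφ'1, L, hL0, hφ'lip⟩ := aux_exists_trunc
  set g : ℕ → α → ℝ := fun n => φ ∘ f n with hgdef
  have hgD : ∀ n, g n ∈ D := fun n =>
    (hchain φ φ hφcd hφcd hφbd hφbd hφ0 hφ0 (f n) (hf n) (f n) (hf n)).1
  have hchaing : ∀ n k : ℕ, ∀ᵐ x ∂m,
      Γ (g n) (g k) x = deriv φ (f n x) * deriv φ (f k x) * Γ (f n) (f k) x := fun n k =>
    (hchain φ φ hφcd hφcd hφbd hφbd hφ0 hφ0 (f n) (hf n) (f k) (hf k)).2.2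
  -- L² smallness of g
  have hgL2 : Tendsto (fun n => ∫⁻ x, ENNReal.ofReal ((g n x) ^ 2) ∂m) atTop (𝓝 0) := by
    have hbound : ∀ n, ∫⁻ x, ENNReal.ofReal ((g n x) ^ 2) ∂m
        ≤ ENNReal.ofReal (2 ^ (2 - p)) * ∫⁻ x, ENNReal.ofReal (|f n x| ^ p) ∂m := by
      intro n
      calc ∫⁻ x, ENNReal.ofReal ((g n x) ^ 2) ∂m
          ≤ ∫⁻ x, ENNReal.ofReal (2 ^ (2 - p)) * ENNReal.ofReal (|f n x| ^ p) ∂m := by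
            refine lintegral_mono fun x => ?_
            rw [← ENNReal.ofReal_mul (Real.rpow_nonneg (by norm_num) _)]
            exact ENNReal.ofReal_le_ofReal
              (aux_sq_le p hp1 hp2 (f n x) (g n x) (hφ2 _) (hφle _))
        _ = ENNReal.ofReal (2 ^ (2 - p)) * ∫⁻ x, ENNReal.ofReal (|f n x| ^ p) ∂m :=
            lintegral_const_mul' _ _ ENNReal.ofReal_ne_top
    exact aux_squeeze_zero ENNReal.ofReal_ne_top hbound hLp
  -- Γ-Cauchy property of g
  have hgC : Tendsto (fun nm : ℕ × ℕ =>
      ∫⁻ x, ENNReal.ofReal (Γ (g nm.1 - g nm.2) (g nm.1 - g nm.2) x) ∂m) atTop (𝓝 0) := by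
    have hs2 : ∀ t : ℝ, (deriv φ t) ^ 2 ≤ 1 := fun t => by
      have := abs_le.mp (hφ'le t); nlinarith
    have hfst : Tendsto (Prod.fst : ℕ × ℕ → ℕ) atTop atTop := by
      rw [← prod_atTop_atTop_eq]; exact tendsto_fst
    have hsnd : Tendsto (Prod.snd : ℕ × ℕ → ℕ) atTop atTop := by
      rw [← prod_atTop_atTop_eq]; exact tendsto_snd
    -- the master pointwise inequality
    have hmaster : ∀ n k : ℕ, ∀ᵐ x ∂m,
        ENNReal.ofReal (Γ (g n - g k) (g n - g k) x)
          ≤ ENNReal.ofReal (6 * Γ (f n - f k) (f n - f k) x)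
            + ENNReal.ofReal
              (4 * (deriv φ (f n x) - deriv φ (f k x)) ^ 2 * Γ (f k) (f k) x) := by
      intro n k
      filter_upwards [hpsd (f n) (hf n) (f k) (hf k), hchaing n n, hchaing n k,
        hchaing k k] with x hQ hnn hnk hkk
      have hrwg : (1:ℝ) • g n + (-1:ℝ) • g k = g n - g k := by
        funext y; simp [sub_eq_add_neg]
      have hrwf : (1:ℝ) • f n + (-1:ℝ) • f k = f n - f k := by
        funext y; simp [sub_eq_add_neg]
      have e1 : Γ (g n - g k) (g n - g k) x
          = Γ (g n) (g n) x - 2 * Γ (g n) (g k) x + Γ (g k) (g k) x := by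
        rw [← hrwg, hexp (g n) (hgD n) (g k) (hgD k) 1 (-1) x]; ring
      have e2 : Γ (f n - f k) (f n - f k) x
          = Γ (f n) (f n) x - 2 * Γ (f n) (f k) x + Γ (f k) (f k) x := by
        rw [← hrwf, hexp (f n) (hf n) (f k) (hf k) 1 (-1) x]; ring
      have key := aux_quad_key (Γ (f n) (f n) x) (Γ (f n) (f k) x) (Γ (f k) (f k) x)
        (deriv φ (f n x)) (deriv φ (f k x)) hQ (hs2 _) (hs2 _)
      have hreal : Γ (g n - g k) (g n - g k) x
          ≤ 6 * Γ (f n - f k) (f n - f k) x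
            + 4 * (deriv φ (f n x) - deriv φ (f k x)) ^ 2 * Γ (f k) (f k) x := by
        rw [e1, e2, hnn, hnk, hkk]
        nlinarith [key]
      calc ENNReal.ofReal (Γ (g n - g k) (g n - g k) x)
          ≤ ENNReal.ofReal (6 * Γ (f n - f k) (f n - f k) x
              + 4 * (deriv φ (f n x) - deriv φ (f k x)) ^ 2 * Γ (f k) (f k) x) :=
            ENNReal.ofReal_le_ofReal hreal
        _ ≤ _ := ENNReal.ofReal_add_le
    rw [ENNReal.tendsto_nhds_zero]
    intro ε hε
    set ε' := min ε 1 with hε'def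
    have hε'0 : ε' ≠ 0 := (lt_min hε zero_lt_one).ne'
    have hε'top : ε' ≠ ⊤ := ne_top_of_le_ne_top (by norm_num) (min_le_right ε 1)
    have hε'le : ε' ≤ ε := min_le_left _ _
    obtain ⟨B, hBtop, hBle⟩ := hB
    set q := ε'.toReal with hqdef
    have hqpos : 0 < q := ENNReal.toReal_pos hε'0 hε'top
    set c0 : ℝ := q / (32 * (L ^ 2 + 1) * (B.toReal + 1)) with hc0
    have hc0pos : 0 < c0 := div_pos hqpos (by positivity)
    set δ := Real.sqrt c0 with hδdef
    have hδpos : 0 < δ := Real.sqrt_pos.mpr hc0pos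
    have hδsq : δ ^ 2 = c0 := Real.sq_sqrt hc0pos.le
    have hhalf2 : ENNReal.ofReal (q / 2 / 2) = ε' / 2 / 2 := by
      have hne : ε' / 2 / 2 ≠ ⊤ := ne_top_of_le_ne_top hε'top
        (le_trans ENNReal.half_le_self ENNReal.half_le_self)
      rw [show q / 2 / 2 = (ε' / 2 / 2).toReal by simp [ENNReal.toReal_div, hqdef],
        ENNReal.ofReal_toReal hne]
    -- middle bound
    have hmid : ∀ k, ENNReal.ofReal (4 * L ^ 2 * δ ^ 2)
        * (∫⁻ x, ENNReal.ofReal (Γ (f k) (f k) x) ∂m) ≤ ε' / 2 / 2 := by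
      intro k
      have hreal : 4 * L ^ 2 * δ ^ 2 * B.toReal ≤ q / 2 / 2 := by
        rw [hδsq, hc0]
        have hX : (0:ℝ) < (L ^ 2 + 1) * (B.toReal + 1) := by positivity
        have hBt : (0:ℝ) ≤ B.toReal := ENNReal.toReal_nonneg
        have key2 : 4 * L ^ 2 * B.toReal ≤ 8 * ((L ^ 2 + 1) * (B.toReal + 1)) := by
          nlinarith [sq_nonneg L]
        calc 4 * L ^ 2 * (q / (32 * (L ^ 2 + 1) * (B.toReal + 1))) * B.toReal
            = q * (4 * L ^ 2 * B.toReal) / (32 * ((L ^ 2 + 1) * (B.toReal + 1))) := by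
              ring
          _ ≤ q * (8 * ((L ^ 2 + 1) * (B.toReal + 1)))
              / (32 * ((L ^ 2 + 1) * (B.toReal + 1))) := by
              gcongr
          _ = q / 2 / 2 := by
              field_simp
              ring
      calc ENNReal.ofReal (4 * L ^ 2 * δ ^ 2)
          * (∫⁻ x, ENNReal.ofReal (Γ (f k) (f k) x) ∂m)
          ≤ ENNReal.ofReal (4 * L ^ 2 * δ ^ 2) * B := mul_le_mul_right (hBle k) _
        _ = ENNReal.ofReal (4 * L ^ 2 * δ ^ 2 * B.toReal) := by
            rw [← ENNReal.ofReal_toReal hBtop, ← ENNReal.ofReal_mul (by positivity),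
              ENNReal.toReal_ofReal (by positivity)]
        _ ≤ ENNReal.ofReal (q / 2 / 2) := ENNReal.ofReal_le_ofReal hreal
        _ = ε' / 2 / 2 := hhalf2
    -- the bad sets
    set A : ℕ × ℕ → Set α := fun nm => {x | δ < |f nm.1 x - f nm.2 x|} with hAdef
    have hAmeas : ∀ nm, MeasurableSet (A nm) := fun nm =>
      measurableSet_lt measurable_const ((hD_meas _ (hf nm.1)).sub (hD_meas _ (hf nm.2))).abs
    have hAm : Tendsto (fun nm => m (A nm)) atTop (𝓝 0) := by
      refine aux_squeeze_zero (c := (ENNReal.ofReal (δ ^ p))⁻¹) ?_ ?_ hLpdiff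
      · exact ENNReal.inv_ne_top.mpr
          (ENNReal.ofReal_pos.mpr (Real.rpow_pos_of_pos hδpos p)).ne'
      · intro nm
        refine le_trans (hcheb _ ((hD_meas _ (hf nm.1)).sub (hD_meas _ (hf nm.2))) δ hδpos) ?_
        rw [div_eq_mul_inv, mul_comm]
        rfl
    have hUI2 := aux_UI m (fun n x => ENNReal.ofReal (Γ (f n) (f n) x))
      (fun n => (hΓ_int _ (hf n)).ne) hkey A hAmeas hAm Prod.snd hsnd
    have hUIsmall := (ENNReal.tendsto_nhds_zero.mp hUI2) (ε' / 2 / 2 / 2 / 2 / 2 / 2)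
      (aux_half_pos (aux_half_pos (aux_half_pos (aux_half_pos (aux_half_pos
        (aux_half_pos (lt_min hε zero_lt_one)))))))
    have hCsmall := (ENNReal.tendsto_nhds_zero.mp hC) (ε' / 2 / 2 / 2 / 2)
      (aux_half_pos (aux_half_pos (aux_half_pos (aux_half_pos (lt_min hε zero_lt_one)))))
    filter_upwards [hCsmall, hUIsmall] with nm h1 h2
    obtain ⟨n, k⟩ := nm
    simp only at h1 h2 ⊢
    have hdsubD := hD_sub (f n) (hf n) (f k) (hf k)
    have hmeas6 : Measurable fun x =>
        ENNReal.ofReal (6 * Γ (f n - f k) (f n - f k) x) :=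
      ((hΓ_meas _ hdsubD _ hdsubD).const_mul 6).ennreal_ofReal
    have hof6 : ∀ y : ℝ, ENNReal.ofReal (6 * y) = 6 * ENNReal.ofReal y := fun y => by
      rw [ENNReal.ofReal_mul (by norm_num)]; norm_num
    have hof16 : ∀ y : ℝ, ENNReal.ofReal (16 * y) = 16 * ENNReal.ofReal y := fun y => by
      rw [ENNReal.ofReal_mul (by norm_num)]; norm_num
    -- piece 1
    have hp1' : ∫⁻ x, ENNReal.ofReal (6 * Γ (f n - f k) (f n - f k) x) ∂m ≤ ε' / 2 := by
      have he : ∫⁻ x, ENNReal.ofReal (6 * Γ (f n - f k) (f n - f k) x) ∂m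
          = 6 * ∫⁻ x, ENNReal.ofReal (Γ (f n - f k) (f n - f k) x) ∂m := by
        simp_rw [hof6]
        exact lintegral_const_mul' _ _ (by norm_num)
      rw [he]
      refine le_trans (mul_le_mul_left (by norm_num : (6:ℝ≥0∞) ≤ 8) _) ?_
      exact aux_eight_mul_le h1
    -- piece 2, split along A (n, k)
    have hpS : ∫⁻ x in A (n, k), ENNReal.ofReal
        (4 * (deriv φ (f n x) - deriv φ (f k x)) ^ 2 * Γ (f k) (f k) x) ∂m
        ≤ ε' / 2 / 2 := by
      have hptw : ∀ᵐ x ∂(m.restrict (A (n, k))),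
          ENNReal.ofReal (4 * (deriv φ (f n x) - deriv φ (f k x)) ^ 2 * Γ (f k) (f k) x)
            ≤ 16 * ENNReal.ofReal (Γ (f k) (f k) x) := by
        filter_upwards [ae_restrict_of_ae (hΓ_pos (f k) (hf k))] with x hx
        rw [← hof16]
        refine ENNReal.ofReal_le_ofReal ?_
        have hb1 := abs_le.mp (hφ'le (f n x))
        have hb2 := abs_le.mp (hφ'le (f k x))
        have h4 : (0:ℝ) ≤ 4 - (deriv φ (f n x) - deriv φ (f k x)) ^ 2 := by
          nlinarith [hb1.1, hb1.2, hb2.1, hb2.2]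
        nlinarith [mul_nonneg h4 hx]
      calc ∫⁻ x in A (n, k), ENNReal.ofReal
            (4 * (deriv φ (f n x) - deriv φ (f k x)) ^ 2 * Γ (f k) (f k) x) ∂m
          ≤ ∫⁻ x in A (n, k), 16 * ENNReal.ofReal (Γ (f k) (f k) x) ∂m :=
            lintegral_mono_ae hptw
        _ = 16 * ∫⁻ x in A (n, k), ENNReal.ofReal (Γ (f k) (f k) x) ∂m :=
            lintegral_const_mul' _ _ (by norm_num)
        _ ≤ ε' / 2 / 2 := aux_sixteen_mul_le h2
    have hpSc : ∫⁻ x in (A (n, k))ᶜ, ENNReal.ofReal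
        (4 * (deriv φ (f n x) - deriv φ (f k x)) ^ 2 * Γ (f k) (f k) x) ∂m
        ≤ ε' / 2 / 2 := by
      have hptw : ∀ᵐ x ∂(m.restrict ((A (n, k))ᶜ)),
          ENNReal.ofReal (4 * (deriv φ (f n x) - deriv φ (f k x)) ^ 2 * Γ (f k) (f k) x)
            ≤ ENNReal.ofReal (4 * L ^ 2 * δ ^ 2) * ENNReal.ofReal (Γ (f k) (f k) x) := by
        filter_upwards [ae_restrict_of_ae (hΓ_pos (f k) (hf k)),
          ae_restrict_mem (hAmeas (n, k)).compl] with x hx hmem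
        rw [← ENNReal.ofReal_mul (by positivity)]
        refine ENNReal.ofReal_le_ofReal ?_
        have hmem' : ¬ δ < |f n x - f k x| := hmem
        push_neg at hmem'
        have hlip := hφ'lip (f n x) (f k x)
        have habs : |deriv φ (f n x) - deriv φ (f k x)| ≤ L * δ := by
          refine le_trans hlip ?_
          have : |f n x - f k x| ≤ δ := by
            simpa [Pi.sub_apply] using hmem'
          exact mul_le_mul_of_nonneg_left this hL0
        have hw : (deriv φ (f n x) - deriv φ (f k x)) ^ 2 ≤ L ^ 2 * δ ^ 2 := by
          have h2' : |deriv φ (f n x) - deriv φ (f k x)| ^ 2 ≤ (L * δ) ^ 2 :=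
            pow_le_pow_left₀ (abs_nonneg _) habs 2
          calc (deriv φ (f n x) - deriv φ (f k x)) ^ 2
              = |deriv φ (f n x) - deriv φ (f k x)| ^ 2 := (sq_abs _).symm
            _ ≤ (L * δ) ^ 2 := h2'
            _ = L ^ 2 * δ ^ 2 := by ring
        have hmm : (deriv φ (f n x) - deriv φ (f k x)) ^ 2 * Γ (f k) (f k) x
            ≤ L ^ 2 * δ ^ 2 * Γ (f k) (f k) x := mul_le_mul_of_nonneg_right hw hx
        linarith
      calc ∫⁻ x in (A (n, k))ᶜ, ENNReal.ofReal
            (4 * (deriv φ (f n x) - deriv φ (f k x)) ^ 2 * Γ (f k) (f k) x) ∂m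
          ≤ ∫⁻ x in (A (n, k))ᶜ,
              ENNReal.ofReal (4 * L ^ 2 * δ ^ 2) * ENNReal.ofReal (Γ (f k) (f k) x) ∂m :=
            lintegral_mono_ae hptw
        _ = ENNReal.ofReal (4 * L ^ 2 * δ ^ 2)
            * ∫⁻ x in (A (n, k))ᶜ, ENNReal.ofReal (Γ (f k) (f k) x) ∂m :=
            lintegral_const_mul' _ _ ENNReal.ofReal_ne_top
        _ ≤ ENNReal.ofReal (4 * L ^ 2 * δ ^ 2)
            * ∫⁻ x, ENNReal.ofReal (Γ (f k) (f k) x) ∂m :=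
            mul_le_mul_right (setLIntegral_le_lintegral _ _) _
        _ ≤ ε' / 2 / 2 := hmid k
    -- assemble
    calc ∫⁻ x, ENNReal.ofReal (Γ (g n - g k) (g n - g k) x) ∂m
        ≤ ∫⁻ x, (ENNReal.ofReal (6 * Γ (f n - f k) (f n - f k) x)
            + ENNReal.ofReal
              (4 * (deriv φ (f n x) - deriv φ (f k x)) ^ 2 * Γ (f k) (f k) x)) ∂m :=
          lintegral_mono_ae (hmaster n k)
      _ = (∫⁻ x, ENNReal.ofReal (6 * Γ (f n - f k) (f n - f k) x) ∂m)
          + ∫⁻ x, ENNReal.ofReal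
            (4 * (deriv φ (f n x) - deriv φ (f k x)) ^ 2 * Γ (f k) (f k) x) ∂m :=
          lintegral_add_left hmeas6 _
      _ = (∫⁻ x, ENNReal.ofReal (6 * Γ (f n - f k) (f n - f k) x) ∂m)
          + ((∫⁻ x in A (n, k), ENNReal.ofReal
              (4 * (deriv φ (f n x) - deriv φ (f k x)) ^ 2 * Γ (f k) (f k) x) ∂m)
            + ∫⁻ x in (A (n, k))ᶜ, ENNReal.ofReal
              (4 * (deriv φ (f n x) - deriv φ (f k x)) ^ 2 * Γ (f k) (f k) x) ∂m) := by
          rw [lintegral_add_compl _ (hAmeas (n, k))]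
      _ ≤ ε' / 2 + (ε' / 2 / 2 + ε' / 2 / 2) := add_le_add hp1' (add_le_add hpS hpSc)
      _ = ε' := by rw [ENNReal.add_halves, ENNReal.add_halves]
      _ ≤ ε := hε'le
  have hEg := hL2 g hgD hgC hgL2
  -- conclusion
  rw [ENNReal.tendsto_nhds_zero]
  intro ε hε
  have hSmeas : ∀ n : ℕ, MeasurableSet {x | 1 < |f n x|} := fun n =>
    measurableSet_lt measurable_const (hD_meas _ (hf n)).abs
  have hSm : Tendsto (fun n => m {x | 1 < |f n x|}) atTop (𝓝 0) := by
    refine aux_squeeze_zero (c := (ENNReal.ofReal ((1:ℝ) ^ p))⁻¹) ?_ ?_ hLp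
    · exact ENNReal.inv_ne_top.mpr
        (ENNReal.ofReal_pos.mpr (Real.rpow_pos_of_pos one_pos p)).ne'
    · intro n
      refine le_trans (hcheb _ (hD_meas _ (hf n)) 1 one_pos) ?_
      rw [div_eq_mul_inv, mul_comm]
  have hUI1 := aux_UI m (fun n x => ENNReal.ofReal (Γ (f n) (f n) x))
    (fun n => (hΓ_int _ (hf n)).ne) hkey (fun n => {x | 1 < |f n x|}) hSmeas hSm
    id tendsto_id
  have hgsmall := (ENNReal.tendsto_nhds_zero.mp hEg) (ε / 2) (aux_half_pos hε)
  have hUIsmall := (ENNReal.tendsto_nhds_zero.mp hUI1) (ε / 2) (aux_half_pos hε)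
  filter_upwards [hgsmall, hUIsmall] with n h1 h2
  have hptwise : ∀ᵐ x ∂m, ENNReal.ofReal (Γ (f n) (f n) x)
      ≤ ENNReal.ofReal (Γ (g n) (g n) x)
        + Set.indicator {x | 1 < |f n x|}
            (fun x => ENNReal.ofReal (Γ (f n) (f n) x)) x := by
    filter_upwards [hchaing n n] with x hx
    rcases le_or_gt (|f n x|) 1 with hle1 | hgt1
    · have heq : Γ (g n) (g n) x = Γ (f n) (f n) x := by
        rw [hx, hφ'1 _ hle1]; ring
      rw [heq]
      exact le_self_add
    · have heq : Set.indicator {x | 1 < |f n x|}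
          (fun x => ENNReal.ofReal (Γ (f n) (f n) x)) x
          = ENNReal.ofReal (Γ (f n) (f n) x) :=
        Set.indicator_of_mem (show x ∈ {y | 1 < |f n y|} from hgt1) _
      rw [heq]
      exact le_add_self
  calc ∫⁻ x, ENNReal.ofReal (Γ (f n) (f n) x) ∂m
      ≤ ∫⁻ x, (ENNReal.ofReal (Γ (g n) (g n) x)
          + Set.indicator {x | 1 < |f n x|}
              (fun x => ENNReal.ofReal (Γ (f n) (f n) x)) x) ∂m :=
        lintegral_mono_ae hptwise
    _ = (∫⁻ x, ENNReal.ofReal (Γ (g n) (g n) x) ∂m)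
        + ∫⁻ x, Set.indicator {x | 1 < |f n x|}
            (fun x => ENNReal.ofReal (Γ (f n) (f n) x)) x ∂m :=
        lintegral_add_left ((hΓ_meas _ (hgD n) _ (hgD n)).ennreal_ofReal) _
    _ = (∫⁻ x, ENNReal.ofReal (Γ (g n) (g n) x) ∂m)
        + ∫⁻ x in {x | 1 < |f n x|}, ENNReal.ofReal (Γ (f n) (f n) x) ∂m := by
        rw [lintegral_indicator (hSmeas n)]
    _ ≤ ε / 2 + ε / 2 := add_le_add h1 h2
    _ = ε := ENNReal.add_halves ε
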